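/- For β > 0 and x ∈ ℝ^d, prox_{R + β·ℓ1}(x) = prox_{β·ℓ1}(prox_R(x)), where ℓ1(w) = Σ_i |w_i| and R is the weight-sharing regularizer. -/

import Mathlib

noncomputable def R (d : ℕ) (w : Fin d → ℝ) : ℝ :=
  (1 / ((d : ℝ) - 1)) * ∑ i : Fin d, ∑ j : Fin d, if j < i then |w i - w j| else 0

noncomputable def h (d : ℕ) (π : Equiv.Perm (Fin d)) (w : Fin d → ℝ) : ℝ :=
  (1 / ((d : ℝ) - 1)) * ∑ i : Fin d, (2 * ((i : ℕ) : ℝ) + 1 - (d : ℝ)) * w (π i)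

/-! ### Auxiliary lemmas -/

lemma ws_halfsum {d : ℕ} (f : Fin d → ℝ) :
    2 * (∑ i : Fin d, ∑ j : Fin d, if j < i then |f i - f j| else 0)
      = ∑ i : Fin d, ∑ j : Fin d, |f i - f j| := by
  have hswap : (∑ i : Fin d, ∑ j : Fin d, if j < i then |f i - f j| else 0)
      = ∑ i : Fin d, ∑ j : Fin d, if i < j then |f i - f j| else 0 := by
    rw [Finset.sum_comm]
    refine Finset.sum_congr rfl fun i _ => Finset.sum_congr rfl fun j _ => ?_
    rw [abs_sub_comm]
  rw [two_mul]
  nth_rewrite 2 [hswap]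
  rw [← Finset.sum_add_distrib]
  refine Finset.sum_congr rfl fun i _ => ?_
  rw [← Finset.sum_add_distrib]
  refine Finset.sum_congr rfl fun j _ => ?_
  rcases lt_trichotomy j i with hlt | heq | hgt
  · simp [hlt, not_lt.2 hlt.le]
  · simp [heq, sub_self]
  · simp [hgt, not_lt.2 hgt.le]

lemma ws_reindex {d : ℕ} (f : Fin d → ℝ) (π : Equiv.Perm (Fin d)) :
    (∑ i : Fin d, ∑ j : Fin d, |f i - f j|)
      = ∑ i : Fin d, ∑ j : Fin d, |f (π i) - f (π j)| := by
  have h1 : ∀ i, (∑ j : Fin d, |f (π i) - f (π j)|) = ∑ j : Fin d, |f (π i) - f j| :=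
    fun i => Equiv.sum_comp π (fun j => |f (π i) - f j|)
  calc (∑ i : Fin d, ∑ j : Fin d, |f i - f j|)
      = ∑ i : Fin d, ∑ j : Fin d, |f (π i) - f j| :=
        (Equiv.sum_comp π (fun i => ∑ j : Fin d, |f i - f j|)).symm
    _ = ∑ i : Fin d, ∑ j : Fin d, |f (π i) - f (π j)| :=
        Finset.sum_congr rfl fun i _ => (h1 i).symm

lemma ws_count {d : ℕ} (a : Fin d → ℝ) :
    (∑ i : Fin d, ∑ j : Fin d, if j < i then (a i - a j) else 0)
      = ∑ i : Fin d, (((i : ℕ) : ℝ) - ((d - 1 - (i : ℕ) : ℕ) : ℝ)) * a i := by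
  have hsplit : (∑ i : Fin d, ∑ j : Fin d, if j < i then (a i - a j) else 0)
      = (∑ i : Fin d, ∑ j : Fin d, if j < i then a i else 0)
        - ∑ i : Fin d, ∑ j : Fin d, if j < i then a j else 0 := by
    rw [← Finset.sum_sub_distrib]
    refine Finset.sum_congr rfl fun i _ => ?_
    rw [← Finset.sum_sub_distrib]
    refine Finset.sum_congr rfl fun j _ => ?_
    split <;> simp
  rw [hsplit]
  have h1 : (∑ i : Fin d, ∑ j : Fin d, if j < i then a i else 0)
      = ∑ i : Fin d, ((i : ℕ) : ℝ) * a i := by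
    refine Finset.sum_congr rfl fun i _ => ?_
    rw [← Finset.sum_filter, Finset.sum_const]
    have : Finset.univ.filter (fun j => j < i) = Finset.Iio i := by ext j; simp
    rw [this, Fin.card_Iio, nsmul_eq_mul]
  have h2 : (∑ i : Fin d, ∑ j : Fin d, if j < i then a j else 0)
      = ∑ j : Fin d, ((d - 1 - (j : ℕ) : ℕ) : ℝ) * a j := by
    rw [Finset.sum_comm]
    refine Finset.sum_congr rfl fun j _ => ?_
    rw [← Finset.sum_filter, Finset.sum_const]
    have : Finset.univ.filter (fun i => j < i) = Finset.Ioi j := by ext i; simp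
    rw [this, Fin.card_Ioi, nsmul_eq_mul]
  rw [h1, h2, ← Finset.sum_sub_distrib]
  exact Finset.sum_congr rfl fun i _ => by ring

lemma ws_R_eq_h {d : ℕ} (hd : 2 ≤ d) (w : Fin d → ℝ) (π : Equiv.Perm (Fin d))
    (hm : Monotone (w ∘ π)) : R d w = h d π w := by
  have key : (∑ i : Fin d, ∑ j : Fin d, if j < i then |w i - w j| else 0)
      = ∑ i : Fin d, (2 * ((i : ℕ) : ℝ) + 1 - (d : ℝ)) * w (π i) := by
    have e1 : (∑ i : Fin d, ∑ j : Fin d, if j < i then |w i - w j| else 0)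
        = ∑ i : Fin d, ∑ j : Fin d, if j < i then |w (π i) - w (π j)| else 0 := by
      have := ws_halfsum w
      have h2 := ws_halfsum (fun i => w (π i))
      have h3 := ws_reindex w π
      linarith
    rw [e1]
    have e2 : (∑ i : Fin d, ∑ j : Fin d, if j < i then |w (π i) - w (π j)| else 0)
        = ∑ i : Fin d, ∑ j : Fin d, if j < i then (w (π i) - w (π j)) else 0 := by
      refine Finset.sum_congr rfl fun i _ => Finset.sum_congr rfl fun j _ => ?_
      split
      · next hij => exact abs_of_nonneg (sub_nonneg.2 (hm hij.le))
      · rfl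
    rw [e2, ws_count (fun i => w (π i))]
    refine Finset.sum_congr rfl fun i _ => ?_
    have hi : (i : ℕ) ≤ d - 1 := Nat.le_pred_of_lt i.isLt
    have h1d : 1 ≤ d := le_trans (by norm_num) hd
    have : ((d - 1 - (i : ℕ) : ℕ) : ℝ) = (d : ℝ) - 1 - (i : ℕ) := by
      rw [Nat.cast_sub hi, Nat.cast_sub h1d]
      norm_num
    rw [this]; ring
  rw [R, h, key]

noncomputable def wsSt (β s : ℝ) : ℝ := max 0 (s - β) + min 0 (s + β)

lemma ws_st_cases {β : ℝ} (hβ : 0 ≤ β) (s : ℝ) :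
    (β ≤ s ∧ wsSt β s = s - β) ∨ (-β ≤ s ∧ s ≤ β ∧ wsSt β s = 0)
      ∨ (s ≤ -β ∧ wsSt β s = s + β) := by
  rcases le_total β s with h | h
  · left; refine ⟨h, ?_⟩
    rw [wsSt, max_eq_right (by linarith), min_eq_left (by linarith)]; ring
  · rcases le_total (-β) s with h2 | h2
    · right; left; refine ⟨h2, h, ?_⟩
      rw [wsSt, max_eq_left (by linarith), min_eq_left (by linarith)]; ring
    · right; right; refine ⟨h2, ?_⟩
      rw [wsSt, max_eq_left (by linarith), min_eq_right (by linarith)]; ring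

lemma ws_st_mono (β : ℝ) : Monotone (wsSt β) := fun s t h =>
  add_le_add (max_le_max le_rfl (by linarith)) (min_le_min le_rfl (by linarith))

lemma ws_sub_st_mono {β : ℝ} (hβ : 0 ≤ β) {s t : ℝ} (h : s ≤ t) :
    s - wsSt β s ≤ t - wsSt β t := by
  rcases ws_st_cases hβ s with ⟨h1, e1⟩ | ⟨h1, h1', e1⟩ | ⟨h1, e1⟩ <;>
    rcases ws_st_cases hβ t with ⟨h2, e2⟩ | ⟨h2, h2', e2⟩ | ⟨h2, e2⟩ <;>
    rw [e1, e2] <;> linarith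

lemma ws_st_min {β : ℝ} (hβ : 0 < β) (s u : ℝ) :
    β * |wsSt β s| + (1/2) * (wsSt β s - s)^2 + (1/2) * (u - wsSt β s)^2
      ≤ β * |u| + (1/2) * (u - s)^2 := by
  rcases ws_st_cases hβ.le s with ⟨h1, e1⟩ | ⟨h1, h1', e1⟩ | ⟨h1, e1⟩ <;> rw [e1] <;>
    rcases abs_cases u with ⟨hu, hu'⟩ | ⟨hu, hu'⟩ <;> rw [hu]
  · rw [abs_of_nonneg (by linarith)]; nlinarith
  · rw [abs_of_nonneg (by linarith)]; nlinarith [mul_nonneg hβ.le (neg_nonneg.2 hu'.le)]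
  · simp only [abs_zero]; nlinarith [mul_nonneg hβ.le hu']
  · simp only [abs_zero]; nlinarith [mul_nonneg hβ.le (neg_nonneg.2 hu'.le)]
  · rw [abs_of_nonpos (by linarith)]; nlinarith [mul_nonneg hβ.le hu']
  · rw [abs_of_nonpos (by linarith)]; nlinarith

lemma ws_convex {d : ℕ} (hc : 0 ≤ 1 / ((d : ℝ) - 1)) (u v : Fin d → ℝ) {t : ℝ}
    (ht0 : 0 ≤ t) (ht1 : t ≤ 1) :
    R d (fun i => u i + t * (v i - u i)) ≤ (1 - t) * R d u + t * R d v := by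
  unfold R
  have hsum : (∑ i : Fin d, ∑ j : Fin d,
        if j < i then |(u i + t * (v i - u i)) - (u j + t * (v j - u j))| else 0)
      ≤ (1 - t) * (∑ i : Fin d, ∑ j : Fin d, if j < i then |u i - u j| else 0)
        + t * (∑ i : Fin d, ∑ j : Fin d, if j < i then |v i - v j| else 0) := by
    have step : (∑ i : Fin d, ∑ j : Fin d,
        if j < i then |(u i + t * (v i - u i)) - (u j + t * (v j - u j))| else 0)
      ≤ ∑ i : Fin d, ∑ j : Fin d,
          ((1 - t) * (if j < i then |u i - u j| else 0) + t * (if j < i then |v i - v j| else 0)) := by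
      refine Finset.sum_le_sum fun i _ => Finset.sum_le_sum fun j _ => ?_
      split
      · next hij =>
        have he : (u i + t * (v i - u i)) - (u j + t * (v j - u j))
            = (1 - t) * (u i - u j) + t * (v i - v j) := by ring
        calc |(u i + t * (v i - u i)) - (u j + t * (v j - u j))|
            ≤ |(1 - t) * (u i - u j)| + |t * (v i - v j)| := by rw [he]; exact abs_add_le _ _
          _ = (1 - t) * |u i - u j| + t * |v i - v j| := by
              rw [abs_mul, abs_mul, abs_of_nonneg (by linarith), abs_of_nonneg ht0]
      · simp
    have expand : (∑ i : Fin d, ∑ j : Fin d,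
          ((1 - t) * (if j < i then |u i - u j| else 0) + t * (if j < i then |v i - v j| else 0)))
        = (1 - t) * (∑ i : Fin d, ∑ j : Fin d, if j < i then |u i - u j| else 0)
          + t * (∑ i : Fin d, ∑ j : Fin d, if j < i then |v i - v j| else 0) := by
      simp only [Finset.sum_add_distrib, ← Finset.mul_sum]
    linarith [step, expand.le, expand.ge]
  nlinarith [mul_le_mul_of_nonneg_left hsum hc]

lemma ws_subgrad {d : ℕ} (hc : 0 ≤ 1 / ((d : ℝ) - 1)) (x u : Fin d → ℝ)
    (hu : ∀ v : Fin d → ℝ,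
      R d u + (1/2) * ∑ i, (u i - x i)^2 ≤ R d v + (1/2) * ∑ i, (v i - x i)^2)
    (v : Fin d → ℝ) :
    R d u + ∑ i, (x i - u i) * (v i - u i) ≤ R d v := by
  set I := ∑ i, (x i - u i) * (v i - u i) with hI
  set Q := ∑ i, (v i - u i)^2 with hQdef
  have hQ : 0 ≤ Q := Finset.sum_nonneg fun i _ => sq_nonneg _
  refine le_of_forall_pos_le_add fun ε hε => ?_
  set t := min 1 (2 * ε / (Q + 1)) with htdef
  have ht0 : 0 < t := lt_min one_pos (by positivity)
  have ht1 : t ≤ 1 := min_le_left _ _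
  have htQ : t * Q ≤ 2 * ε := by
    have h1 : t * (Q + 1) ≤ (2 * ε / (Q + 1)) * (Q + 1) :=
      mul_le_mul_of_nonneg_right (min_le_right _ _) (by positivity)
    have h2 : (2 * ε / (Q + 1)) * (Q + 1) = 2 * ε := by field_simp
    nlinarith
  have hconv := ws_convex hc u v ht0.le ht1
  have hquad : ∑ i, ((u i + t * (v i - u i)) - x i)^2
      = ∑ i, (u i - x i)^2 - 2 * t * I + t^2 * Q := by
    rw [hI, hQdef, Finset.mul_sum, Finset.mul_sum, ← Finset.sum_sub_distrib,
      ← Finset.sum_add_distrib]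
    exact Finset.sum_congr rfl fun i _ => by ring
  have hmin := hu (fun i => u i + t * (v i - u i))
  rw [hquad] at hmin
  have key : t * (R d u + I) ≤ t * (R d v + t * Q / 2) := by nlinarith
  have := (mul_le_mul_iff_right₀ ht0).mp key
  linarith

/-! ### Main theorem -/

theorem stmt9 {d : ℕ} (hd : 2 ≤ d) (β : ℝ) (hβ : 0 < β)
    (x u1 u2 : Fin d → ℝ)
    (hu1 : ∀ v : Fin d → ℝ,
      R d u1 + (1/2) * ∑ i, (u1 i - x i)^2 ≤ R d v + (1/2) * ∑ i, (v i - x i)^2)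
    (hu2 : ∀ v : Fin d → ℝ,
      β * ∑ i, |u2 i| + (1/2) * ∑ i, (u2 i - u1 i)^2 ≤
        β * ∑ i, |v i| + (1/2) * ∑ i, (v i - u1 i)^2) :
    ∀ v : Fin d → ℝ,
      R d u2 + β * ∑ i, |u2 i| + (1/2) * ∑ i, (u2 i - x i)^2 ≤
        R d v + β * ∑ i, |v i| + (1/2) * ∑ i, (v i - x i)^2 := by
  intro v
  have h2d : (2 : ℝ) ≤ (d : ℝ) := by exact_mod_cast hd
  have hdpos : (0 : ℝ) < (d : ℝ) - 1 := by linarith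
  have hc : 0 ≤ 1 / ((d : ℝ) - 1) := by positivity
  -- coordinatewise minimality for u2
  have coord : ∀ (i : Fin d) (s : ℝ),
      β * |u2 i| + (1/2) * (u2 i - u1 i)^2 ≤ β * |s| + (1/2) * (s - u1 i)^2 := by
    intro i s
    have hv := hu2 (Function.update u2 i s)
    have habs : ∀ k, |Function.update u2 i s k| = Function.update (fun k => |u2 k|) i |s| k := by
      intro k; rcases eq_or_ne k i with rfl | hk
      · simp
      · simp [Function.update_of_ne hk]
    have hsq : ∀ k, (Function.update u2 i s k - u1 k)^2
        = Function.update (fun k => (u2 k - u1 k)^2) i ((s - u1 i)^2) k := by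
      intro k; rcases eq_or_ne k i with rfl | hk
      · simp
      · simp [Function.update_of_ne hk]
    have e1 : ∑ k, |Function.update u2 i s k|
        = |s| + ∑ k ∈ Finset.univ \ {i}, |u2 k| := by
      rw [Finset.sum_congr rfl fun k _ => habs k]
      exact Finset.sum_update_of_mem (Finset.mem_univ i) _ _
    have e2 : ∑ k, (Function.update u2 i s k - u1 k)^2
        = (s - u1 i)^2 + ∑ k ∈ Finset.univ \ {i}, (u2 k - u1 k)^2 := by
      rw [Finset.sum_congr rfl fun k _ => hsq k]
      exact Finset.sum_update_of_mem (Finset.mem_univ i) _ _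
    have e3 : ∑ k, |u2 k| = |u2 i| + ∑ k ∈ Finset.univ \ {i}, |u2 k| := by
      rw [← Finset.erase_eq]
      exact (Finset.add_sum_erase _ _ (Finset.mem_univ i)).symm
    have e4 : ∑ k, (u2 k - u1 k)^2
        = (u2 i - u1 i)^2 + ∑ k ∈ Finset.univ \ {i}, (u2 k - u1 k)^2 := by
      rw [← Finset.erase_eq]
      exact (Finset.add_sum_erase _ _ (Finset.mem_univ i)).symm
    rw [e1, e2, e3, e4] at hv
    nlinarith [hv]
  -- u2 is the soft-thresholding of u1
  have hst : ∀ i, u2 i = wsSt β (u1 i) := by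
    intro i
    have ha := coord i (wsSt β (u1 i))
    have hb := ws_st_min hβ (u1 i) (u2 i)
    have h0 : (u2 i - wsSt β (u1 i))^2 = 0 :=
      le_antisymm (by linarith) (sq_nonneg _)
    have hz : u2 i - wsSt β (u1 i) = 0 := by
      nlinarith [sq_abs (u2 i - wsSt β (u1 i)), abs_nonneg (u2 i - wsSt β (u1 i)), sq_nonneg (u2 i - wsSt β (u1 i)), h0]
    linarith [hz]
  -- sorting permutation
  set π : Equiv.Perm (Fin d) := Tuple.sort u1 with hπ
  have hm1 : Monotone (u1 ∘ π) := Tuple.monotone_sort u1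
  have hm2 : Monotone (u2 ∘ π) := by
    intro a b hab
    simp only [Function.comp_apply]
    rw [hst, hst]
    exact ws_st_mono β (hm1 hab)
  set w3 : Fin d → ℝ := fun i => 2 * u1 i - u2 i with hw3
  have hm3 : Monotone (w3 ∘ π) := by
    intro a b hab
    simp only [Function.comp_apply, hw3]
    have h1 := hm1 hab
    simp only [Function.comp_apply] at h1
    have h2 := ws_sub_st_mono hβ.le h1
    rw [hst (π a), hst (π b)]
    linarith
  have e1 : R d u1 = h d π u1 := ws_R_eq_h hd u1 π hm1
  have e2 : R d u2 = h d π u2 := ws_R_eq_h hd u2 π hm2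
  have e3 : R d w3 = h d π w3 := ws_R_eq_h hd w3 π hm3
  have elin : h d π u2 + h d π w3 = 2 * h d π u1 := by
    have hsum : (∑ i : Fin d, (2 * ((i : ℕ) : ℝ) + 1 - (d : ℝ)) * u2 (π i))
        + (∑ i : Fin d, (2 * ((i : ℕ) : ℝ) + 1 - (d : ℝ)) * w3 (π i))
        = 2 * ∑ i : Fin d, (2 * ((i : ℕ) : ℝ) + 1 - (d : ℝ)) * u1 (π i) := by
      rw [← Finset.sum_add_distrib, Finset.mul_sum]
      refine Finset.sum_congr rfl fun i _ => ?_
      simp only [hw3]; ring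
    simp only [h]
    nlinarith [hsum]
  have B := ws_subgrad hc x u1 hu1
  have hC : R d u2 ≤ R d u1 + ∑ i, (x i - u1 i) * (u2 i - u1 i) := by
    have hb := B w3
    have hrw : ∑ i, (x i - u1 i) * (w3 i - u1 i)
        = -∑ i, (x i - u1 i) * (u2 i - u1 i) := by
      rw [← Finset.sum_neg_distrib]
      refine Finset.sum_congr rfl fun i _ => ?_
      simp only [hw3]; ring
    rw [hrw, e3] at hb
    linarith [e1, e2, elin]
  have E : ∀ w : Fin d → ℝ, ∑ i, (w i - x i)^2
      = ∑ i, (w i - u1 i)^2 + (-2) * (∑ i, (x i - u1 i) * (w i - u1 i))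
        + ∑ i, (u1 i - x i)^2 := by
    intro w
    calc ∑ i, (w i - x i)^2
        = ∑ i, ((w i - u1 i)^2 + (-2) * ((x i - u1 i) * (w i - u1 i)) + (u1 i - x i)^2) :=
          Finset.sum_congr rfl fun i _ => by ring
      _ = _ := by
          rw [Finset.sum_add_distrib, Finset.sum_add_distrib, ← Finset.mul_sum]
  have A := hu2 v
  have Bv := B v
  have Eu2 := E u2
  have Ev := E v
  linarith
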